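/- Let X be a nonempty compact metric space and let F ⊆ X × X be a closed relation with X_F^+ nonempty. Then the shift map σ_F^+ : X_F^+ → X_F^+ has the specification property if and only if X_F^+ has the CR-specification property. -/

import Mathlib

open Set Filter Topology

/-- One-sided Mahavier product of a relation `F` on `X`. -/
def MahavierPlus {X : Type*} (F : Set (X × X)) : Set (ℕ → X) :=
  {x | ∀ n : ℕ, (x n, x (n + 1)) ∈ F}

/-- Two-sided Mahavier product of a relation `F` on `X`. -/
def MahavierTwo {X : Type*} (F : Set (X × X)) : Set (ℤ → X) :=
  {x | ∀ n : ℤ, (x n, x (n + 1)) ∈ F}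

/-- The shift map on the one-sided Mahavier product. -/
def shiftPlus {X : Type*} (F : Set (X × X)) (x : MahavierPlus F) : MahavierPlus F :=
  ⟨fun n => (x : ℕ → X) (n + 1), fun n => x.2 (n + 1)⟩

/-- The shift map on the two-sided Mahavier product. -/
def shiftTwo {X : Type*} (F : Set (X × X)) (x : MahavierTwo F) : MahavierTwo F :=
  ⟨fun n => (x : ℤ → X) (n + 1), fun n => x.2 (n + 1)⟩

/-- The metric `D(x,y) = sup_{n ≥ 1} d(x_n, y_n)/2^n` on one-sided sequences
(coordinates are indexed from `0` here, so the weight is `2^(n+1)`). -/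
noncomputable def DPlus {X : Type*} [PseudoMetricSpace X] (x y : ℕ → X) : ℝ :=
  ⨆ n : ℕ, dist (x n) (y n) / 2 ^ (n + 1)

/-- The metric `D(x,y) = sup_{n ∈ ℤ} d(x_n, y_n)/2^{|n|}` on two-sided sequences. -/
noncomputable def DTwo {X : Type*} [PseudoMetricSpace X] (x y : ℤ → X) : ℝ :=
  ⨆ n : ℤ, dist (x n) (y n) / 2 ^ n.natAbs

/-- Topological transitivity. -/
def TopTransitive {Y : Type*} [TopologicalSpace Y] (f : Y → Y) : Prop :=
  ∀ U V : Set Y, IsOpen U → IsOpen V → U.Nonempty → V.Nonempty →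
    ∃ n : ℕ, (f^[n] '' U ∩ V).Nonempty

/-- Topological mixing. -/
def TopMixing {Y : Type*} [TopologicalSpace Y] (f : Y → Y) : Prop :=
  ∀ U V : Set Y, IsOpen U → IsOpen V → U.Nonempty → V.Nonempty →
    ∃ n₀ : ℕ, ∀ n : ℕ, n₀ ≤ n → (f^[n] '' U ∩ V).Nonempty

/-- The shadowing property for a map `f` with respect to a distance `dY`. -/
def ShadowingProp {Y : Type*} (dY : Y → Y → ℝ) (f : Y → Y) : Prop :=
  ∀ ε : ℝ, 0 < ε → ∃ δ : ℝ, 0 < δ ∧ ∀ x : ℕ → Y,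
    (∀ k : ℕ, dY (f (x k)) (x (k + 1)) < δ) →
    ∃ y : Y, ∀ k : ℕ, dY (f^[k] y) (x k) < ε

/-- The specification property for a map `f` with respect to a distance `dY`. -/
def SpecProp {Y : Type*} (dY : Y → Y → ℝ) (f : Y → Y) : Prop :=
  ∀ ε : ℝ, 0 < ε → ∃ N : ℕ, 0 < N ∧ ∀ n : ℕ, 0 < n →
    ∀ x : Fin n → Y, ∀ k l : Fin n → ℕ,
      (∀ i, k i ≤ l i) →
      (∀ i j : Fin n, (i : ℕ) + 1 = (j : ℕ) → l i + N ≤ k j) →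
      ∃ y : Y, ∀ i : Fin n, ∀ m : ℕ, k i ≤ m → m ≤ l i →
        dY (f^[m] y) (f^[m] (x i)) ≤ ε

/-- The CR-specification property for the one-sided Mahavier product of `F`. -/
def CRSpec {X : Type*} [PseudoMetricSpace X] (F : Set (X × X)) : Prop :=
  ∀ ε : ℝ, 0 < ε → ∃ N : ℕ, 0 < N ∧ ∀ n : ℕ, 0 < n →
    ∀ x : Fin n → MahavierPlus F, ∀ k l : Fin n → ℕ,
      (∀ i, k i ≤ l i) →
      (∀ i j : Fin n, (i : ℕ) + 1 = (j : ℕ) → l i + N ≤ k j) →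
      ∃ y : MahavierPlus F, ∀ i : Fin n, ∀ m : ℕ, k i ≤ m → m ≤ l i →
        dist ((x i : ℕ → X) m) ((y : ℕ → X) m) ≤ ε

/-- The image of a set under a relation. -/
def relImage {X : Type*} (F : Set (X × X)) (A : Set X) : Set X :=
  {y | ∃ a ∈ A, (a, y) ∈ F}

/-- Composition of relations. -/
def relComp {X : Type*} (F G : Set (X × X)) : Set (X × X) :=
  {p | ∃ z : X, (p.1, z) ∈ F ∧ (z, p.2) ∈ G}

/-- Iterated composition `F^n` of a relation with itself. -/
def relPow {X : Type*} (F : Set (X × X)) : ℕ → Set (X × X)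
  | 0 => {p | p.1 = p.2}
  | n + 1 => relComp (relPow F n) F


open Set Filter Topology

section Aux

variable {X : Type*} [MetricSpace X] [CompactSpace X]

lemma shift_iter_coord {F : Set (X × X)} (y : MahavierPlus F) (m n : ℕ) :
    (((shiftPlus F)^[m] y : MahavierPlus F) : ℕ → X) n = (y : ℕ → X) (n + m) := by
  induction m generalizing y with
  | zero => rfl
  | succ m ih =>
    rw [Function.iterate_succ_apply, ih]
    show (y : ℕ → X) _ = (y : ℕ → X) _
    congr 1


lemma dist_le_diam (a b : X) : dist a b ≤ Metric.diam (univ : Set X) :=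
  Metric.dist_le_diam_of_mem isCompact_univ.isBounded (mem_univ a) (mem_univ b)

lemma one_le_two_pow' (n : ℕ) : (1:ℝ) ≤ 2 ^ n :=
  one_le_pow₀ (by norm_num)

lemma dplus_bdd (x y : ℕ → X) :
    BddAbove (Set.range fun n : ℕ => dist (x n) (y n) / 2 ^ (n + 1)) := by
  refine ⟨Metric.diam (univ : Set X), ?_⟩
  rintro _ ⟨n, rfl⟩
  calc dist (x n) (y n) / 2 ^ (n + 1) ≤ dist (x n) (y n) :=
        div_le_self dist_nonneg (one_le_two_pow' _)
    _ ≤ _ := dist_le_diam _ _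

lemma le_dplus (x y : ℕ → X) (n : ℕ) :
    dist (x n) (y n) / 2 ^ (n + 1) ≤ DPlus x y :=
  le_ciSup (dplus_bdd x y) n

omit [CompactSpace X] in
lemma dplus_le {x y : ℕ → X} {ε : ℝ} (hε : 0 ≤ ε)
    (h : ∀ n, dist (x n) (y n) / 2 ^ (n + 1) ≤ ε) : DPlus x y ≤ ε :=
  Real.iSup_le h hε

end Aux
/-- For a closed relation `F` on a nonempty compact metric space `X`
with nonempty one-sided Mahavier product, the shift map has the specification property
iff `X_F^+` has the CR-specification property. -/
theorem stmt0 {X : Type*} [MetricSpace X] [CompactSpace X] [Nonempty X]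
    (F : Set (X × X)) (hF : IsClosed F) (hne : (MahavierPlus F).Nonempty) :
    SpecProp (fun a b : MahavierPlus F => DPlus (a : ℕ → X) (b : ℕ → X)) (shiftPlus F) ↔
      CRSpec F := by
  constructor
  · intro hspec ε hε
    obtain ⟨N, hN, h⟩ := hspec (ε / 2) (by positivity)
    refine ⟨N, hN, fun n hn x k l hkl hgap => ?_⟩
    obtain ⟨y, hy⟩ := h n hn x k l hkl hgap
    refine ⟨y, fun i m hkm hml => ?_⟩
    have hle := le_dplus ((((shiftPlus F)^[m] y) : MahavierPlus F) : ℕ → X)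
      ((((shiftPlus F)^[m] (x i)) : MahavierPlus F) : ℕ → X) 0
    rw [shift_iter_coord, shift_iter_coord] at hle
    have h2 := hy i m hkm hml
    have h3 : dist ((y : ℕ → X) m) ((x i : ℕ → X) m) / 2 ≤ ε / 2 := by
      have := hle.trans h2
      simpa using this
    rw [dist_comm] at h3
    linarith
  · intro hcr ε hε
    set C := Metric.diam (univ : Set X) with hCdef
    obtain ⟨M, hM⟩ := pow_unbounded_of_one_lt (C / ε) (one_lt_two (α := ℝ))
    obtain ⟨N', hN', h⟩ := hcr ε hε
    refine ⟨N' + M, by omega, fun n hn x k l hkl hgap => ?_⟩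
    obtain ⟨y, hy⟩ := h n hn x k (fun i => l i + M)
      (fun i => le_trans (hkl i) (Nat.le_add_right _ _))
      (fun i j hij => by have := hgap i j hij; omega)
    refine ⟨y, fun i m hkm hml => ?_⟩
    apply dplus_le hε.le
    intro p
    rw [shift_iter_coord, shift_iter_coord]
    rcases le_or_gt p M with hp | hp
    · have hd := hy i (p + m) (le_trans hkm (Nat.le_add_left _ _)) (by omega)
      rw [dist_comm] at hd
      calc dist ((y : ℕ → X) (p + m)) ((x i : ℕ → X) (p + m)) / 2 ^ (p + 1)
          ≤ ε / 2 ^ (p + 1) := by gcongr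
        _ ≤ ε := div_le_self hε.le (one_le_two_pow' _)
    · have hd : dist ((y : ℕ → X) (p + m)) ((x i : ℕ → X) (p + m)) ≤ C :=
        dist_le_diam _ _
      rw [div_le_iff₀ (by positivity)]
      have h1 : C < ε * 2 ^ M := by
        have := (div_lt_iff₀ hε).mp hM; linarith
      have h2 : ε * 2 ^ M ≤ ε * 2 ^ (p + 1) :=
        mul_le_mul_of_nonneg_left (pow_le_pow_right₀ one_le_two (by omega)) hε.le
      linarith
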